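/- Let p, p̂ be probability distributions on a finite set S with TV(p, p̂) ≤ ε₁/2, let V : S → [0, V_max], and let β ≥ β_ > 0. Then | E_{p̂}[e^{-V(s')/β}] - E_p[e^{-V(s')/β}] | ≤ ε₁, and consequently, for β ∈ [β_, V_max/δ], the dual objectives f(β) = -β log(E_p[e^{-V/β}]) - βδ and f̂(β) = -β log(E_{p̂}[e^{-V/β}]) - βδ satisfy |f̂(β) - f(β)| ≤ ε₁ · (V_max/δ) · e^{V_max/β_}. -/
import Mathlib


open Real

lemma log_lip {a b c : ℝ} (hc : 0 < c) (ha : c ≤ a) (hb : c ≤ b) :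
    |Real.log a - Real.log b| ≤ |a - b| / c := by
  have ha' : 0 < a := lt_of_lt_of_le hc ha
  have hb' : 0 < b := lt_of_lt_of_le hc hb
  have key : ∀ x y : ℝ, 0 < x → c ≤ y → Real.log x - Real.log y ≤ |x - y| / c := by
    intro x y hx hy
    have hy' : 0 < y := lt_of_lt_of_le hc hy
    have h1 : Real.log x - Real.log y = Real.log (x / y) := (Real.log_div hx.ne' hy'.ne').symm
    have h2 : Real.log (x / y) ≤ x / y - 1 := Real.log_le_sub_one_of_pos (by positivity)
    have h3 : x / y - 1 = (x - y) / y := by field_simp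
    have h4 : (x - y) / y ≤ |x - y| / c := by
      calc (x - y) / y ≤ |x - y| / y := by gcongr; exact le_abs_self _
        _ ≤ |x - y| / c := by gcongr
    linarith [h1 ▸ h2]
  rw [abs_sub_le_iff]
  constructor
  · exact key a b ha' hb
  · simpa [abs_sub_comm] using key b a hb' ha
theorem stmt11 {S : Type*} [Fintype S] [Nonempty S]
    (p phat : S → ℝ)
    (hp : ∀ s, 0 ≤ p s) (hp1 : ∑ s, p s = 1)
    (hphat : ∀ s, 0 ≤ phat s) (hphat1 : ∑ s, phat s = 1)
    (ε1 Vmax δ βlow : ℝ) (hε : 0 ≤ ε1) (hVmax : 0 < Vmax) (hδ : 0 < δ)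
    (hβlow : 0 < βlow) (hβlowle : βlow ≤ Vmax / δ)
    (hTV : (1 / 2) * (∑ s, |p s - phat s|) ≤ ε1 / 2)
    (V : S → ℝ) (hV : ∀ s, V s ∈ Set.Icc 0 Vmax)
    (β : ℝ) (hβ : β ∈ Set.Icc βlow (Vmax / δ)) :
    |(∑ s, phat s * Real.exp (-V s / β)) - ∑ s, p s * Real.exp (-V s / β)| ≤ ε1 ∧
    |(-β * Real.log (∑ s, phat s * Real.exp (-V s / β)) - β * δ) -
        (-β * Real.log (∑ s, p s * Real.exp (-V s / β)) - β * δ)|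
      ≤ ε1 * (Vmax / δ) * Real.exp (Vmax / βlow) := by
  obtain ⟨hβ1, hβ2⟩ := hβ
  have hβpos : 0 < β := lt_of_lt_of_le hβlow hβ1
  have hexple : ∀ s, Real.exp (-V s / β) ≤ 1 := by
    intro s
    rw [Real.exp_le_one_iff]
    have := (hV s).1
    have : -V s / β ≤ 0 := div_nonpos_of_nonpos_of_nonneg (by linarith) hβpos.le
    linarith
  have hTV' : ∑ s, |p s - phat s| ≤ ε1 := by linarith
  -- Part 1
  have part1 : |(∑ s, phat s * Real.exp (-V s / β)) - ∑ s, p s * Real.exp (-V s / β)| ≤ ε1 := by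
    rw [← Finset.sum_sub_distrib]
    calc |∑ s, (phat s * Real.exp (-V s / β) - p s * Real.exp (-V s / β))|
        ≤ ∑ s, |phat s * Real.exp (-V s / β) - p s * Real.exp (-V s / β)| :=
          Finset.abs_sum_le_sum_abs _ _
      _ ≤ ∑ s, |p s - phat s| := by
          apply Finset.sum_le_sum
          intro s _
          have : phat s * Real.exp (-V s / β) - p s * Real.exp (-V s / β)
              = (phat s - p s) * Real.exp (-V s / β) := by ring
          rw [this, abs_mul, abs_sub_comm]
          have h1 : |Real.exp (-V s / β)| ≤ 1 := by
            rw [abs_of_pos (Real.exp_pos _)]; exact hexple s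
          calc |p s - phat s| * |Real.exp (-V s / β)| ≤ |p s - phat s| * 1 :=
                mul_le_mul_of_nonneg_left h1 (abs_nonneg _)
            _ = |p s - phat s| := mul_one _
      _ ≤ ε1 := hTV'
  refine ⟨part1, ?_⟩
  -- lower bounds on the sums
  set c := Real.exp (-(Vmax / βlow)) with hc
  have hcpos : 0 < c := Real.exp_pos _
  have hlb : ∀ q : S → ℝ, (∀ s, 0 ≤ q s) → (∑ s, q s = 1) →
      c ≤ ∑ s, q s * Real.exp (-V s / β) := by
    intro q hq hq1
    have : ∑ s, q s * c ≤ ∑ s, q s * Real.exp (-V s / β) := by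
      apply Finset.sum_le_sum
      intro s _
      apply mul_le_mul_of_nonneg_left _ (hq s)
      apply Real.exp_le_exp.mpr
      have h1 : V s ≤ Vmax := (hV s).2
      have h2 : Vmax / β ≤ Vmax / βlow := div_le_div_of_nonneg_left hVmax.le hβlow hβ1
      have h3 : V s / β ≤ Vmax / β := by gcongr
      have := h3.trans h2
      rw [neg_div]
      linarith
    calc c = ∑ s, q s * c := by rw [← Finset.sum_mul, hq1, one_mul]
      _ ≤ _ := this
  have hA := hlb phat hphat hphat1
  have hB := hlb p hp hp1
  have hlog := log_lip hcpos hA hB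
  have habs : |(-β * Real.log (∑ s, phat s * Real.exp (-V s / β)) - β * δ) -
      (-β * Real.log (∑ s, p s * Real.exp (-V s / β)) - β * δ)|
      = β * |Real.log (∑ s, phat s * Real.exp (-V s / β)) -
          Real.log (∑ s, p s * Real.exp (-V s / β))| := by
    rw [show (-β * Real.log (∑ s, phat s * Real.exp (-V s / β)) - β * δ) -
        (-β * Real.log (∑ s, p s * Real.exp (-V s / β)) - β * δ)
        = -β * (Real.log (∑ s, phat s * Real.exp (-V s / β)) -
          Real.log (∑ s, p s * Real.exp (-V s / β))) by ring, abs_mul, abs_neg,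
      abs_of_pos hβpos]
  rw [habs]
  have hcinv : c⁻¹ = Real.exp (Vmax / βlow) := by
    rw [hc, ← Real.exp_neg, neg_neg]
  calc β * |Real.log (∑ s, phat s * Real.exp (-V s / β)) -
        Real.log (∑ s, p s * Real.exp (-V s / β))|
      ≤ β * (ε1 / c) := by
        apply mul_le_mul_of_nonneg_left _ hβpos.le
        refine hlog.trans ?_
        gcongr
    _ ≤ (Vmax / δ) * (ε1 / c) := by
        apply mul_le_mul_of_nonneg_right hβ2 (by positivity)
    _ = ε1 * (Vmax / δ) * Real.exp (Vmax / βlow) := by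
        rw [div_eq_mul_inv ε1, hcinv]; ring
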